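/- The model-predicted model-ROC curve is always concave: for any integrable intensity λ : W → [0,∞) satisfying the regularity assumptions (the cdf of λ(U) for uniform U on W is continuous and strictly increasing on the range of λ), the curve R_{λ,λ}(p) = TP(FP⁻¹(p)), with TP(t) = ∫_W 1{λ(u) > t} λ(u) du / ∫_W λ du and FP(t) = |{u : λ(u) > t}|/|W|, is concave on [0,1]. -/

import Mathlib

open MeasureTheory Set

noncomputable def spatFP {W : Type*} [MeasurableSpace W] (μ : Measure W) (lam : W → ℝ)
    (t : ℝ) : ℝ :=
  (μ {u | t < lam u}).toReal / (μ Set.univ).toReal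

/-- Theoretical model true positive rate: the fraction of total intensity mass
captured above the threshold `t`. -/
noncomputable def modelTP {W : Type*} [MeasurableSpace W] (μ : Measure W)
    (lam : W → ℝ) (t : ℝ) : ℝ :=
  (∫ u in {u | t < lam u}, lam u ∂μ) / ∫ u, lam u ∂μ

section Aux

variable {W : Type*} [MeasurableSpace W] {μ : Measure W} [IsFiniteMeasure μ] {lam : W → ℝ}

lemma measSet (hmeas : Measurable lam) (t : ℝ) : MeasurableSet {u | t < lam u} :=
  measurableSet_lt measurable_const hmeas

lemma measMid (hmeas : Measurable lam) (s t : ℝ) :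
    MeasurableSet {u | s < lam u ∧ lam u ≤ t} := by
  have h : {u | s < lam u ∧ lam u ≤ t} = {u | s < lam u} ∩ {u | lam u ≤ t} := rfl
  rw [h]
  exact (measSet hmeas s).inter (measurableSet_le hmeas measurable_const)

lemma decompSet {s t : ℝ} (hst : s ≤ t) :
    {u | s < lam u} = {u | s < lam u ∧ lam u ≤ t} ∪ {u | t < lam u} := by
  ext u
  simp only [mem_setOf_eq, mem_union]
  constructor
  · intro h
    rcases le_or_gt (lam u) t with h' | h'
    · exact Or.inl ⟨h, h'⟩
    · exact Or.inr h'
  · rintro (⟨h, _⟩ | h)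
    · exact h
    · exact lt_of_le_of_lt hst h

lemma disjointMid (s t : ℝ) :
    Disjoint {u | s < lam u ∧ lam u ≤ t} {u | t < lam u} := by
  rw [Set.disjoint_left]
  rintro u ⟨_, h2⟩ h3
  exact absurd h3 (not_lt.mpr h2)

lemma measureDiff (hmeas : Measurable lam) {s t : ℝ} (hst : s ≤ t) :
    (μ {u | s < lam u}).toReal
      = (μ {u | s < lam u ∧ lam u ≤ t}).toReal + (μ {u | t < lam u}).toReal := by
  rw [decompSet hst, measure_union (disjointMid s t) (measSet hmeas t),
    ENNReal.toReal_add (measure_ne_top μ _) (measure_ne_top μ _)]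

lemma integralDiff (hmeas : Measurable lam) (hint : Integrable lam μ) {s t : ℝ} (hst : s ≤ t) :
    ∫ u in {u | s < lam u}, lam u ∂μ
      = (∫ u in {u | s < lam u ∧ lam u ≤ t}, lam u ∂μ)
        + ∫ u in {u | t < lam u}, lam u ∂μ := by
  rw [decompSet hst]
  exact setIntegral_union (disjointMid s t) (measSet hmeas t)
    hint.integrableOn hint.integrableOn

lemma intMidUpper (hmeas : Measurable lam) (hint : Integrable lam μ) (s t : ℝ) :
    ∫ u in {u | s < lam u ∧ lam u ≤ t}, lam u ∂μ
      ≤ max t 0 * (μ {u | s < lam u ∧ lam u ≤ t}).toReal := by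
  have h1 : ∫ u in {u | s < lam u ∧ lam u ≤ t}, lam u ∂μ
      ≤ ∫ _u in {u | s < lam u ∧ lam u ≤ t}, max t 0 ∂μ := by
    apply setIntegral_mono_on hint.integrableOn
      (integrableOn_const (measure_lt_top μ _).ne) (measMid hmeas s t)
    intro u hu
    exact le_trans hu.2 (le_max_left t 0)
  calc ∫ u in {u | s < lam u ∧ lam u ≤ t}, lam u ∂μ
      ≤ ∫ _u in {u | s < lam u ∧ lam u ≤ t}, max t 0 ∂μ := h1
    _ = (μ {u | s < lam u ∧ lam u ≤ t}).toReal * max t 0 := by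
        rw [setIntegral_const, smul_eq_mul, measureReal_def]
    _ = max t 0 * (μ {u | s < lam u ∧ lam u ≤ t}).toReal := mul_comm _ _

lemma intMidLower (hmeas : Measurable lam) (hnonneg : ∀ u, 0 ≤ lam u)
    (hint : Integrable lam μ) (s t : ℝ) :
    max s 0 * (μ {u | s < lam u ∧ lam u ≤ t}).toReal
      ≤ ∫ u in {u | s < lam u ∧ lam u ≤ t}, lam u ∂μ := by
  have h1 : ∫ _u in {u | s < lam u ∧ lam u ≤ t}, max s 0 ∂μ
      ≤ ∫ u in {u | s < lam u ∧ lam u ≤ t}, lam u ∂μ := by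
    apply setIntegral_mono_on (integrableOn_const (measure_lt_top μ _).ne)
      hint.integrableOn (measMid hmeas s t)
    intro u hu
    exact max_le (le_of_lt hu.1) (hnonneg u)
  calc max s 0 * (μ {u | s < lam u ∧ lam u ≤ t}).toReal
      = ∫ _u in {u | s < lam u ∧ lam u ≤ t}, max s 0 ∂μ := by
        rw [setIntegral_const, smul_eq_mul, mul_comm, measureReal_def]
    _ ≤ ∫ u in {u | s < lam u ∧ lam u ≤ t}, lam u ∂μ := h1

end Aux

/-- the model-predicted model-ROC curve is always concave.
For an integrable intensity `λ ≥ 0` whose spatial FP function is continuous and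
strictly decreasing on the range of `λ` (so `FP⁻¹` is well defined), the curve
`R_{λ,λ}(p) = TP(FP⁻¹(p))` is concave on `[0,1]`. -/
theorem model_predicted_roc_concave
    {W : Type*} [MeasurableSpace W] (μ : Measure W) [IsFiniteMeasure μ]
    (hμ0 : 0 < μ Set.univ)
    (lam : W → ℝ) (hmeas : Measurable lam) (hnonneg : ∀ u, 0 ≤ lam u)
    (hint : Integrable lam μ) (hpos : 0 < ∫ u, lam u ∂μ)
    (hcont : Continuous (spatFP μ lam))
    (hanti : StrictAntiOn (spatFP μ lam) (Set.range lam))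
    (FPinv : ℝ → ℝ)
    (hinv : ∀ p ∈ Set.Icc (0 : ℝ) 1, spatFP μ lam (FPinv p) = p) :
    ConcaveOn ℝ (Set.Icc (0 : ℝ) 1) (fun p => modelTP μ lam (FPinv p)) := by
  set m : ℝ := ∫ u, lam u ∂μ with hm_def
  set M : ℝ := (μ Set.univ).toReal with hM_def
  have hM : 0 < M := ENNReal.toReal_pos hμ0.ne' (measure_ne_top μ _)
  have hm : 0 < m := hpos
  -- spatFP is antitone
  have hFPanti : ∀ s t : ℝ, s ≤ t → spatFP μ lam t ≤ spatFP μ lam s := by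
    intro s t hst
    unfold spatFP
    have hsub : {u | t < lam u} ⊆ {u | s < lam u} := fun u hu => lt_of_le_of_lt hst hu
    have hmono := ENNReal.toReal_mono (measure_ne_top μ _) (measure_mono hsub)
    exact div_le_div_of_nonneg_right hmono hM.le
  -- order reversal for FPinv
  have hord : ∀ p q : ℝ, p ∈ Set.Icc (0:ℝ) 1 → q ∈ Set.Icc (0:ℝ) 1 → p < q →
      FPinv q < FPinv p := by
    intro p q hp hq hpq
    by_contra h
    push_neg at h
    have := hFPanti _ _ h
    rw [hinv p hp, hinv q hq] at this
    linarith
  -- slope bounds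
  have pairUpper : ∀ s t : ℝ, s ≤ t →
      modelTP μ lam s - modelTP μ lam t
        ≤ max t 0 * M / m * (spatFP μ lam s - spatFP μ lam t) := by
    intro s t hst
    have hTP : modelTP μ lam s - modelTP μ lam t
        = (∫ u in {u | s < lam u ∧ lam u ≤ t}, lam u ∂μ) / m := by
      unfold modelTP
      rw [integralDiff hmeas hint hst]
      ring
    have hFP : spatFP μ lam s - spatFP μ lam t
        = (μ {u | s < lam u ∧ lam u ≤ t}).toReal / M := by
      unfold spatFP
      rw [measureDiff hmeas hst]
      ring
    rw [hTP, hFP]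
    have hb := intMidUpper (μ := μ) hmeas hint s t
    calc (∫ u in {u | s < lam u ∧ lam u ≤ t}, lam u ∂μ) / m
        ≤ (max t 0 * (μ {u | s < lam u ∧ lam u ≤ t}).toReal) / m :=
          div_le_div_of_nonneg_right hb hm.le
      _ = max t 0 * M / m * ((μ {u | s < lam u ∧ lam u ≤ t}).toReal / M) := by
          field_simp
  have pairLower : ∀ s t : ℝ, s ≤ t →
      max s 0 * M / m * (spatFP μ lam s - spatFP μ lam t)
        ≤ modelTP μ lam s - modelTP μ lam t := by
    intro s t hst
    have hTP : modelTP μ lam s - modelTP μ lam t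
        = (∫ u in {u | s < lam u ∧ lam u ≤ t}, lam u ∂μ) / m := by
      unfold modelTP
      rw [integralDiff hmeas hint hst]
      ring
    have hFP : spatFP μ lam s - spatFP μ lam t
        = (μ {u | s < lam u ∧ lam u ≤ t}).toReal / M := by
      unfold spatFP
      rw [measureDiff hmeas hst]
      ring
    rw [hTP, hFP]
    have hb := intMidLower (μ := μ) hmeas hnonneg hint s t
    calc max s 0 * M / m * ((μ {u | s < lam u ∧ lam u ≤ t}).toReal / M)
        = (max s 0 * (μ {u | s < lam u ∧ lam u ≤ t}).toReal) / m := by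
          field_simp
      _ ≤ (∫ u in {u | s < lam u ∧ lam u ≤ t}, lam u ∂μ) / m :=
          div_le_div_of_nonneg_right hb hm.le
  -- key three-point inequality
  have key : ∀ p q r : ℝ, p ∈ Set.Icc (0:ℝ) 1 → r ∈ Set.Icc (0:ℝ) 1 →
      p < q → q < r → ∀ α β : ℝ, 0 ≤ α → 0 ≤ β → α + β = 1 → q = α * p + β * r →
      α * modelTP μ lam (FPinv p) + β * modelTP μ lam (FPinv r)
        ≤ modelTP μ lam (FPinv q) := by
    intro p q r hp hr hpq hqr α β hα hβ hαβ hqe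
    have hq : q ∈ Set.Icc (0:ℝ) 1 := ⟨le_trans hp.1 hpq.le, le_trans hqr.le hr.2⟩
    have hab : FPinv r < FPinv q := hord q r hq hr hqr
    have hbc : FPinv q < FPinv p := hord p q hp hq hpq
    set a := FPinv r
    set b := FPinv q
    set c := FPinv p
    have h1 := pairUpper a b hab.le
    have h2 := pairLower b c hbc.le
    rw [hinv r hr, hinv q hq] at h1
    rw [hinv q hq, hinv p hp] at h2
    -- h1 : TP a - TP b ≤ max b 0 * M / m * (r - q)
    -- h2 : max b 0 * M / m * (q - p) ≤ TP b - TP c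
    have hK : 0 ≤ max b 0 * M / m := by positivity
    have hbal : α * (q - p) = β * (r - q) := by linear_combination q * hαβ + hqe
    have hbal2 : α * (max b 0 * M / m * (q - p)) = β * (max b 0 * M / m * (r - q)) := by
      linear_combination (max b 0 * M / m) * hbal
    have hTPb : α * modelTP μ lam b + β * modelTP μ lam b = modelTP μ lam b := by
      linear_combination (modelTP μ lam b) * hαβ
    linarith [mul_le_mul_of_nonneg_left h1 hβ, mul_le_mul_of_nonneg_left h2 hα, hbal2, hTPb]
  refine ⟨convex_Icc 0 1, ?_⟩
  intro x hx y hy α β hα hβ hαβ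
  simp only [smul_eq_mul]
  rcases eq_or_lt_of_le hα with hα0 | hα0
  · have hβ1 : β = 1 := by linarith
    simp [← hα0, hβ1]
  rcases eq_or_lt_of_le hβ with hβ0 | hβ0
  · have hα1 : α = 1 := by linarith
    simp [← hβ0, hα1]
  rcases lt_trichotomy x y with hxy | hxy | hxy
  · have e1 : α * x + β * y - x = β * (y - x) := by linear_combination x * hαβ
    have e2 : y - (α * x + β * y) = α * (y - x) := by linear_combination (-y) * hαβ
    have h1 : x < α * x + β * y := by nlinarith [mul_pos hβ0 (sub_pos.mpr hxy)]
    have h2 : α * x + β * y < y := by nlinarith [mul_pos hα0 (sub_pos.mpr hxy)]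
    exact key x (α * x + β * y) y hx hy h1 h2 α β hα hβ hαβ rfl
  · subst hxy
    have : α * x + β * x = x := by linear_combination x * hαβ
    rw [this, ← add_mul, hαβ, one_mul]
  · have e1 : α * x + β * y - y = α * (x - y) := by linear_combination y * hαβ
    have e2 : x - (α * x + β * y) = β * (x - y) := by linear_combination (-x) * hαβ
    have h1 : y < α * x + β * y := by nlinarith [mul_pos hα0 (sub_pos.mpr hxy)]
    have h2 : α * x + β * y < x := by nlinarith [mul_pos hβ0 (sub_pos.mpr hxy)]
    have := key y (α * x + β * y) x hy hx h1 h2 β α hβ hα (by linarith) (by ring)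
    linarith
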